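/- With the partition construction of G and B, set σ = Σ_{S : S induces a spanning tree of G and E_r ⊆ S} det(B_S), and for x > 0 set Z(x) = Σ_{S : S induces a spanning tree of G} x^{2|S ∩ E_r|} · det(B_S). Suppose ε ∈ (0,1) and there is an index set S̃ inducing a spanning tree of G with E_r ⊆ S̃ and det(B_{S̃}) > 0, and put x = (det(B + I) / det(B_{S̃})) · (2/ε). Then x^{2m} · σ ≤ Z(x) ≤ e^{ε/2} · x^{2m} · σ. -/

import Mathlib

open scoped Classical

/-- The principal minor of `A` on the index set `S` (equal to `1` when `S = ∅`). -/
noncomputable def principalMinor {ι : Type*} [DecidableEq ι]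
    (A : Matrix ι ι ℝ) (S : Finset ι) : ℝ :=
  (A.submatrix (fun i : ↥S => (i : ι)) (fun i : ↥S => (i : ι))).det

/-- The edge of the graph `G` associated with an edge index in `Fin m ⊕ Fin m`:
the left edge `{v_{g j}, w_{g j, j}}` and the right edge `{w_{g j, j}, v_{g j + 1}}`. -/
def partEdge {n m : ℕ} (g : Fin m → Fin n) : (Fin m ⊕ Fin m) → Sym2 (Fin (n + 1) ⊕ Fin m)
  | Sum.inl j => s(Sum.inl (g j).castSucc, Sum.inr j)
  | Sum.inr j => s(Sum.inr j, Sum.inl (g j).succ)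

/-- The spanning subgraph of `G` whose edges are those indexed by `S ⊆ Fin m ⊕ Fin m`. -/
def partSubgraph {n m : ℕ} (g : Fin m → Fin n) (S : Finset (Fin m ⊕ Fin m)) :
    SimpleGraph (Fin (n + 1) ⊕ Fin m) :=
  SimpleGraph.fromEdgeSet (partEdge g '' ↑S)

/-- The matrix `B` of the construction: the left-left block is `A`, the right-right block is
the identity, and the off-diagonal blocks vanish. -/
def matB {m : ℕ} (A : Matrix (Fin m) (Fin m) ℝ) :
    Matrix (Fin m ⊕ Fin m) (Fin m ⊕ Fin m) ℝ :=
  Matrix.of fun p q =>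
    match p, q with
    | Sum.inl j₁, Sum.inl j₂ => A j₁ j₂
    | Sum.inr j, Sum.inr j' => if j = j' then 1 else 0
    | _, _ => 0

/-- The set `E_ℓ` of left edge indices. -/
def leftIdx (m : ℕ) : Finset (Fin m ⊕ Fin m) := Finset.univ.image Sum.inl

/-- The set `E_r` of right edge indices. -/
def rightIdx (m : ℕ) : Finset (Fin m ⊕ Fin m) := Finset.univ.image Sum.inr

open Matrix in
lemma det_add_one_eq_sum_principalMinor {ι : Type*} [Fintype ι] [DecidableEq ι]
    (M : Matrix ι ι ℝ) :
    (M + 1).det = ∑ S : Finset ι, principalMinor M S := by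
  have h0 : (M + 1).det
      = (detRowAlternating : AlternatingMap ℝ (ι → ℝ) ℝ ι).toMultilinearMap
        (Matrix.of.symm M + Matrix.of.symm (1 : Matrix ι ι ℝ)) := rfl
  rw [h0, MultilinearMap.map_add_univ]
  refine Finset.sum_congr rfl fun s _ => ?_
  have hterm : (detRowAlternating : AlternatingMap ℝ (ι → ℝ) ℝ ι).toMultilinearMap
      (s.piecewise (Matrix.of.symm M) (Matrix.of.symm (1 : Matrix ι ι ℝ)))
      = (Matrix.of (s.piecewise (Matrix.of.symm M) (Matrix.of.symm (1 : Matrix ι ι ℝ)))).det := rfl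
  rw [hterm]
  set e : {a // a ∈ s} ⊕ {a // a ∉ s} ≃ ι := Equiv.sumCompl (· ∈ s) with he
  rw [← Matrix.det_submatrix_equiv_self e]
  have hb : (Matrix.of (s.piecewise (Matrix.of.symm M) (Matrix.of.symm (1 : Matrix ι ι ℝ)))).submatrix e e
      = Matrix.fromBlocks (M.submatrix (fun i : ↥s => (i : ι)) (fun i : ↥s => (i : ι)))
          (M.submatrix (fun i : ↥s => (i : ι)) (fun i : {a // a ∉ s} => (i : ι))) 0 1 := by
    ext p q
    cases p with
    | inl i =>
      cases q with
      | inl j => simp [he, Finset.piecewise_eq_of_mem _ _ _ i.2, Matrix.of_apply, Matrix.of_symm_apply]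
      | inr j => simp [he, Finset.piecewise_eq_of_mem _ _ _ i.2, Matrix.of_apply, Matrix.of_symm_apply]
    | inr i =>
      cases q with
      | inl j =>
        have hij : (i : ι) ≠ (j : ι) := fun h => i.2 (h ▸ j.2)
        simp [he, Finset.piecewise_eq_of_notMem _ _ _ i.2, Matrix.one_apply, hij, Matrix.of_apply, Matrix.of_symm_apply]
      | inr j =>
        simp [he, Finset.piecewise_eq_of_notMem _ _ _ i.2, Matrix.one_apply,
          Subtype.ext_iff, Matrix.of_apply, Matrix.of_symm_apply]
  rw [hb, Matrix.det_fromBlocks_zero₂₁, Matrix.det_one, mul_one, principalMinor]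

lemma psd_det_nonneg {ι : Type*} [Fintype ι] [DecidableEq ι] {M : Matrix ι ι ℝ}
    (h : M.PosSemidef) : 0 ≤ M.det := by
  exact h.det_nonneg

lemma matB_posSemidef {m : ℕ} {A : Matrix (Fin m) (Fin m) ℝ} (hA : A.PosSemidef) :
    (matB A).PosSemidef := by
  have h : matB A = Matrix.fromBlocks A 0 0 1 := by
    ext p q
    cases p <;> cases q <;> simp [matB, Matrix.fromBlocks, Matrix.one_apply]
  rw [h]
  have : Invertible (1 : Matrix (Fin m) (Fin m) ℝ) := invertibleOne
  have h2 := Matrix.PosDef.fromBlocks₂₂ A (0 : Matrix (Fin m) (Fin m) ℝ)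
    (Matrix.PosDef.one (n := Fin m) (R := ℝ))
  simp only [Matrix.conjTranspose_zero, Matrix.zero_mul, Matrix.mul_zero, sub_zero] at h2
  exact h2.mpr hA

/-- For the partition construction, with `σ` the sum of `det (B_S)` over spanning trees
containing `E_r` and `Z x` the spanning-tree DPP normalizing constant of the rescaled matrix,
the choice `x = det(B + I)/det(B_{S̃}) · (2/ε)` gives `x^{2m} σ ≤ Z x ≤ e^{ε/2} x^{2m} σ`. -/
theorem part_spanningTree_Z_bounds {n m : ℕ} (hn : 1 ≤ n) (hm : 1 ≤ m)
    (g : Fin m → Fin n) (hg : Function.Surjective g)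
    (A : Matrix (Fin m) (Fin m) ℝ) (hA : A.PosSemidef)
    (ε : ℝ) (hε0 : 0 < ε) (hε1 : ε < 1)
    (St : Finset (Fin m ⊕ Fin m)) (hSt : (partSubgraph g St).IsTree)
    (hStr : rightIdx m ⊆ St) (hStpos : 0 < principalMinor (matB A) St)
    (x σ : ℝ) (Z : ℝ → ℝ)
    (hx : x = (matB A + 1).det / principalMinor (matB A) St * (2 / ε))
    (hσ : σ = ∑ S ∈ Finset.univ.filter (fun S : Finset (Fin m ⊕ Fin m) =>
        (partSubgraph g S).IsTree ∧ rightIdx m ⊆ S),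
      principalMinor (matB A) S)
    (hZ : ∀ t : ℝ, Z t = ∑ S ∈ Finset.univ.filter (fun S : Finset (Fin m ⊕ Fin m) =>
        (partSubgraph g S).IsTree),
      t ^ (2 * (S ∩ rightIdx m).card) * principalMinor (matB A) S) :
    x ^ (2 * m) * σ ≤ Z x ∧ Z x ≤ Real.exp (ε / 2) * (x ^ (2 * m) * σ) := by
  classical
  set B := matB A with hB
  set d := principalMinor B St with hdd
  set δ := (B + 1).det with hδδ
  have hBpsd : B.PosSemidef := matB_posSemidef hA
  have hminor_nonneg : ∀ S : Finset (Fin m ⊕ Fin m), 0 ≤ principalMinor B S := fun S =>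
    psd_det_nonneg (hBpsd.submatrix _)
  have htotal : δ = ∑ S : Finset (Fin m ⊕ Fin m), principalMinor B S :=
    det_add_one_eq_sum_principalMinor B
  have hd : 0 < d := hStpos
  have hdle : d ≤ δ := by
    rw [htotal]
    exact Finset.single_le_sum (fun S _ => hminor_nonneg S) (Finset.mem_univ St)
  have hδpos : 0 < δ := lt_of_lt_of_le hd hdle
  have hx2 : 2 ≤ x := by
    rw [hx]
    have h1 : 1 ≤ δ / d := (one_le_div hd).mpr hdle
    have h2 : 2 ≤ 2 / ε := by
      rw [le_div_iff₀ hε0]; nlinarith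
    nlinarith
  have hx1 : (1 : ℝ) ≤ x := by linarith
  have hx0 : (0 : ℝ) < x := by linarith
  have hcard_r : (rightIdx m).card = m := by
    rw [rightIdx, Finset.card_image_of_injective _ Sum.inr_injective, Finset.card_univ,
      Fintype.card_fin]
  -- split Z x
  set T := Finset.univ.filter (fun S : Finset (Fin m ⊕ Fin m) => (partSubgraph g S).IsTree)
    with hT
  have hsplit : Z x
      = (∑ S ∈ T.filter (fun S => rightIdx m ⊆ S),
          x ^ (2 * (S ∩ rightIdx m).card) * principalMinor B S)
        + ∑ S ∈ T.filter (fun S => ¬ rightIdx m ⊆ S),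
          x ^ (2 * (S ∩ rightIdx m).card) * principalMinor B S := by
    rw [hZ x, ← Finset.sum_filter_add_sum_filter_not T (fun S => rightIdx m ⊆ S)]
  have hfirst : (∑ S ∈ T.filter (fun S => rightIdx m ⊆ S),
      x ^ (2 * (S ∩ rightIdx m).card) * principalMinor B S) = x ^ (2 * m) * σ := by
    rw [hσ, ← Finset.filter_filter, ← hT, Finset.mul_sum]
    refine Finset.sum_congr rfl fun S hS => ?_
    have hsub : rightIdx m ⊆ S := (Finset.mem_filter.mp hS).2
    rw [Finset.inter_eq_right.mpr hsub, hcard_r]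
  set R := ∑ S ∈ T.filter (fun S => ¬ rightIdx m ⊆ S),
      x ^ (2 * (S ∩ rightIdx m).card) * principalMinor B S with hRR
  have hR0 : 0 ≤ R := Finset.sum_nonneg fun S _ =>
    mul_nonneg (pow_nonneg hx0.le _) (hminor_nonneg S)
  have hσ_ge : d ≤ σ := by
    rw [hσ]
    exact Finset.single_le_sum (fun S _ => hminor_nonneg S)
      (Finset.mem_filter.mpr ⟨Finset.mem_univ _, hSt, hStr⟩)
  have hσpos : 0 < σ := lt_of_lt_of_le hd hσ_ge
  -- upper bound for R
  have hRle : R ≤ x ^ (2 * (m - 1)) * δ := by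
    calc R ≤ ∑ S ∈ T.filter (fun S => ¬ rightIdx m ⊆ S),
        x ^ (2 * (m - 1)) * principalMinor B S := by
          refine Finset.sum_le_sum fun S hS => ?_
          have hne : ¬ rightIdx m ⊆ S := (Finset.mem_filter.mp hS).2
          have hss : S ∩ rightIdx m ⊂ rightIdx m := by
            refine Finset.ssubset_iff_subset_ne.mpr ⟨Finset.inter_subset_right, ?_⟩
            exact fun hEq => hne (Finset.inter_eq_right.mp hEq)
          have hlt : (S ∩ rightIdx m).card < m := by
            have := Finset.card_lt_card hss
            omega
          exact mul_le_mul_of_nonneg_right (pow_le_pow_right₀ hx1 (by omega))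
            (hminor_nonneg S)
      _ = x ^ (2 * (m - 1)) * ∑ S ∈ T.filter (fun S => ¬ rightIdx m ⊆ S),
            principalMinor B S := (Finset.mul_sum _ _ _).symm
      _ ≤ x ^ (2 * (m - 1)) * δ := by
          refine mul_le_mul_of_nonneg_left ?_ (pow_nonneg hx0.le _)
          rw [htotal]
          exact Finset.sum_le_sum_of_subset_of_nonneg (Finset.subset_univ _)
            (fun S _ _ => hminor_nonneg S)
  -- key analytic inequality
  have hE : ε / 2 + 1 ≤ Real.exp (ε / 2) := by
    have := Real.add_one_le_exp (ε / 2); linarith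
  have hxd : x * (ε * d) = 2 * δ := by
    rw [hx]; field_simp
  have heq : ε / 2 * (x ^ 2 * d) = δ * x := by linear_combination x / 2 * hxd
  have hkey : δ ≤ (Real.exp (ε / 2) - 1) * (x ^ 2 * d) := by
    have h2 : δ ≤ ε / 2 * (x ^ 2 * d) := by
      rw [heq]; nlinarith
    have h3 : ε / 2 * (x ^ 2 * d) ≤ (Real.exp (ε / 2) - 1) * (x ^ 2 * d) :=
      mul_le_mul_of_nonneg_right (by linarith) (mul_nonneg (sq_nonneg x) hd.le)
    linarith
  have hpow : x ^ (2 * m) = x ^ (2 * (m - 1)) * x ^ 2 := by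
    rw [← pow_add]; congr 1; omega
  have hRfinal : R ≤ (Real.exp (ε / 2) - 1) * (x ^ (2 * m) * σ) := by
    have step1 : x ^ (2 * (m - 1)) * δ
        ≤ x ^ (2 * (m - 1)) * ((Real.exp (ε / 2) - 1) * (x ^ 2 * d)) :=
      mul_le_mul_of_nonneg_left hkey (pow_nonneg hx0.le _)
    have step2 : x ^ (2 * (m - 1)) * ((Real.exp (ε / 2) - 1) * (x ^ 2 * d))
        = (Real.exp (ε / 2) - 1) * (x ^ (2 * m) * d) := by
      rw [hpow]; ring
    have step3 : (Real.exp (ε / 2) - 1) * (x ^ (2 * m) * d)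
        ≤ (Real.exp (ε / 2) - 1) * (x ^ (2 * m) * σ) := by
      refine mul_le_mul_of_nonneg_left ?_ (by linarith)
      exact mul_le_mul_of_nonneg_left hσ_ge (pow_nonneg hx0.le _)
    calc R ≤ x ^ (2 * (m - 1)) * δ := hRle
      _ ≤ _ := step1
      _ = _ := step2
      _ ≤ _ := step3
  constructor
  · rw [hsplit, hfirst]; linarith
  · rw [hsplit, hfirst]
    have : x ^ (2 * m) * σ + R
        ≤ x ^ (2 * m) * σ + (Real.exp (ε / 2) - 1) * (x ^ (2 * m) * σ) := by linarith
    calc x ^ (2 * m) * σ + R ≤ _ := this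
      _ = Real.exp (ε / 2) * (x ^ (2 * m) * σ) := by ring
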